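/- Let (X,T) be a topological dynamical system and μ ∈ M(X,T). Then (X,B,μ,T) is rigid if and only if there exists a strictly increasing sequence A of natural numbers such that (X,T) is μ-A-equicontinuous. -/

import Mathlib

open MeasureTheory Filter Topology ENNReal NNReal

lemma aux_min_delta {P : ℕ → ℝ → Prop}
    (hmono : ∀ n δ δ', δ' ≤ δ → P n δ → P n δ')
    (h : ∀ n, ∃ δ > 0, P n δ) (N : ℕ) : ∃ δ > 0, ∀ n < N, P n δ := by
  induction N with
  | zero => exact ⟨1, one_pos, fun n hn => absurd hn (Nat.not_lt_zero n)⟩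
  | succ N ih =>
    obtain ⟨δ₁, hδ₁, hP₁⟩ := ih
    obtain ⟨δ₂, hδ₂, hP₂⟩ := h N
    refine ⟨min δ₁ δ₂, lt_min hδ₁ hδ₂, fun n hn => ?_⟩
    rcases Nat.lt_succ_iff_lt_or_eq.mp hn with hn | rfl
    · exact hmono n δ₁ _ (min_le_left _ _) (hP₁ n hn)
    · exact hmono n δ₂ _ (min_le_right _ _) hP₂

lemma dir1 {X : Type*} [MetricSpace X] [CompactSpace X] [MeasurableSpace X]
    [BorelSpace X] (μ : Measure X) [IsProbabilityMeasure μ] (T : X ≃ₜ X)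
    (hT : MeasurePreserving T μ μ)
    (h : ∃ t : ℕ → ℕ, StrictMono t ∧ ∀ f : X → ℝ, MemLp f 2 μ →
      Tendsto (fun k => eLpNorm (fun x => f ((⇑T)^[t k] x) - f x) 2 μ)
        atTop (𝓝 0)) :
    (∃ a : ℕ → ℕ, StrictMono a ∧
      ∀ τ > (0 : ℝ), ∃ K : Set X, IsCompact K ∧
        μ K > ENNReal.ofReal (1 - τ) ∧ ∀ ε > (0 : ℝ), ∃ δ > (0 : ℝ),
        ∀ x ∈ K, ∀ y ∈ K, dist x y < δ →
          ∀ n : ℕ, dist ((⇑T)^[a n] x) ((⇑T)^[a n] y) < ε) := by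
  obtain ⟨t, ht, hL2⟩ := h
  have hcont : ∀ n : ℕ, Continuous ((⇑T)^[n]) := fun n => T.continuous.iterate n
  -- each distance-to-point function converges in measure
  have hmem : ∀ p : X, MemLp (fun x => dist x p) 2 μ := by
    intro p
    refine MemLp.of_bound (continuous_id.dist continuous_const).aestronglyMeasurable
      (Metric.diam (Set.univ : Set X)) (ae_of_all μ fun x => ?_)
    rw [Real.norm_eq_abs, abs_of_nonneg dist_nonneg]
    exact Metric.dist_le_diam_of_mem isCompact_univ.isBounded (Set.mem_univ _) (Set.mem_univ _)
  have him : ∀ p : X, TendstoInMeasure μ (fun k x => dist ((⇑T)^[t k] x) p) atTop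
      (fun x => dist x p) := by
    intro p
    refine tendstoInMeasure_of_tendsto_eLpNorm (p := 2) (μ := μ)
      (f := fun k x => dist ((⇑T)^[t k] x) p) (g := fun x => dist x p)
      (by norm_num)
      (fun k => ((hcont (t k)).dist continuous_const).aestronglyMeasurable)
      (continuous_id.dist continuous_const).aestronglyMeasurable ?_
    exact hL2 (fun x => dist x p) (hmem p)
  -- displacement converges in measure to zero
  have hdisp : TendstoInMeasure μ (fun k x => dist ((⇑T)^[t k] x) x) atTop
      (fun _ => (0 : ℝ)) := by
    rw [tendstoInMeasure_iff_dist]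
    intro ε hε
    obtain ⟨s, hsfin, hscov⟩ := (Metric.totallyBounded_iff.mp
      (isCompact_univ : IsCompact (Set.univ : Set X)).totallyBounded) (ε/3) (by positivity)
    have key : ∀ k, μ {x | ε ≤ dist (dist ((⇑T)^[t k] x) x) 0} ≤
        ∑ p ∈ hsfin.toFinset, μ {x | ε/3 ≤ dist (dist ((⇑T)^[t k] x) p) (dist x p)} := by
      intro k
      refine (measure_mono ?_).trans (measure_biUnion_finset_le _ _)
      intro x hx
      simp only [Set.mem_setOf_eq] at hx
      rw [Real.dist_0_eq_abs, abs_of_nonneg dist_nonneg] at hx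
      have hxcov := hscov (Set.mem_univ x)
      rw [Set.mem_iUnion₂] at hxcov
      obtain ⟨p, hp, hxp⟩ := hxcov
      rw [Metric.mem_ball] at hxp
      refine Set.mem_biUnion (hsfin.mem_toFinset.mpr hp) ?_
      simp only [Set.mem_setOf_eq]
      rw [Real.dist_eq]
      have htri : dist ((⇑T)^[t k] x) x ≤ dist ((⇑T)^[t k] x) p + dist p x := dist_triangle _ _ _
      rw [dist_comm p x] at htri
      refine le_trans (by linarith) (le_abs_self _)
    refine tendsto_of_tendsto_of_tendsto_of_le_of_le tendsto_const_nhds ?_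
      (fun k => zero_le) key
    have hsum := tendsto_finset_sum hsfin.toFinset
      (fun p _ => tendstoInMeasure_iff_dist.mp (him p) (ε/3) (by positivity))
    simpa using hsum
  obtain ⟨ns, hns, hae⟩ := hdisp.exists_seq_tendsto_ae
  refine ⟨t ∘ ns, ht.comp hns, ?_⟩
  intro τ hτ
  set ε₀ : ℝ := min (τ/2) 4⁻¹ with hε₀def
  have hε₀pos : 0 < ε₀ := lt_min (by positivity) (by norm_num)
  have hsm : ∀ n : ℕ, StronglyMeasurable (fun x => dist ((⇑T)^[(t ∘ ns) n] x) x) :=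
    fun n => ((hcont _).dist continuous_id).stronglyMeasurable
  obtain ⟨E, hEm, hEμ, hEu⟩ := tendstoUniformlyOn_of_ae_tendsto'
    (f := fun n x => dist ((⇑T)^[(t ∘ ns) n] x) x) (g := fun _ => (0:ℝ)) (μ := μ)
    hsm stronglyMeasurable_const hae hε₀pos
  rw [Metric.tendstoUniformlyOn_iff] at hEu
  have hcompl : ENNReal.ofReal (1 - τ) < μ Eᶜ := by
    have h1 : μ Eᶜ = 1 - μ E := by
      rw [measure_compl hEm (measure_ne_top μ E), measure_univ]
    have h2 : ENNReal.ofReal (1 - τ) < ENNReal.ofReal (1 - ε₀) := by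
      have h4 : ε₀ ≤ 4⁻¹ := hε₀def ▸ min_le_right _ _
      have h5 : ε₀ ≤ τ/2 := hε₀def ▸ min_le_left _ _
      rw [ENNReal.ofReal_lt_ofReal_iff (by linarith)]
      linarith
    have h3 : ENNReal.ofReal (1 - ε₀) ≤ 1 - μ E := by
      rw [ENNReal.ofReal_sub _ hε₀pos.le, ENNReal.ofReal_one]
      exact tsub_le_tsub_left hEμ 1
    rw [h1]; exact h2.trans_le h3
  obtain ⟨K, hKE, hKc, hKμ⟩ := hEm.compl.exists_lt_isCompact_of_ne_top
    (measure_ne_top μ Eᶜ) hcompl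
  refine ⟨K, hKc, hKμ, ?_⟩
  intro ε hε
  obtain ⟨N, hN⟩ := eventually_atTop.mp (hEu (ε/3) (by positivity))
  have humc : ∀ n : ℕ, ∃ δ > (0:ℝ), ∀ x y : X, dist x y < δ →
      dist ((⇑T)^[(t ∘ ns) n] x) ((⇑T)^[(t ∘ ns) n] y) < ε := by
    intro n
    obtain ⟨δ, hδ, hδ'⟩ := Metric.uniformContinuous_iff.mp
      (CompactSpace.uniformContinuous_of_continuous (hcont ((t ∘ ns) n))) ε hε
    exact ⟨δ, hδ, fun x y hxy => hδ' hxy⟩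
  obtain ⟨δ₀, hδ₀, hδ₀'⟩ := aux_min_delta
    (fun n δ δ' hle hP => fun x y hxy => hP x y (lt_of_lt_of_le hxy hle)) humc N
  refine ⟨min δ₀ (ε/3), lt_min hδ₀ (by positivity), ?_⟩
  intro x hx y hy hxy n
  rcases lt_or_ge n N with hn | hn
  · exact hδ₀' n hn x y (lt_of_lt_of_le hxy (min_le_left _ _))
  · have h1 := hN n hn x (hKE hx)
    have h2 := hN n hn y (hKE hy)
    rw [dist_comm, Real.dist_0_eq_abs, abs_of_nonneg dist_nonneg] at h1 h2
    have htri := dist_triangle4 ((⇑T)^[(t ∘ ns) n] x) x y ((⇑T)^[(t ∘ ns) n] y)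
    have hxy' : dist x y < ε/3 := lt_of_lt_of_le hxy (min_le_right _ _)
    rw [dist_comm ((⇑T)^[(t ∘ ns) n] y) y] at h2
    calc dist ((⇑T)^[(t ∘ ns) n] x) ((⇑T)^[(t ∘ ns) n] y) ≤ _ := htri
    _ < ε := by rw [dist_comm y ((⇑T)^[(t ∘ ns) n] y)] at h2 ⊢; linarith

lemma aux_img_meas {X : Type*} [MetricSpace X] [MeasurableSpace X] [BorelSpace X]
    (μ : Measure X) (T : X ≃ₜ X) (hT : MeasurePreserving T μ μ) (n : ℕ)
    {K : Set X} (hK : MeasurableSet K) : μ ((⇑T)^[n] '' K) = μ K := by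
  have hsymm : MeasurePreserving T.symm μ μ := by
    have h1 : MeasurePreserving (T.toMeasurableEquiv) μ μ := hT
    exact h1.symm T.toMeasurableEquiv
  have himg : (⇑T)^[n] '' K = ((⇑T.symm)^[n]) ⁻¹' K := by
    have linv : Function.LeftInverse ⇑T.symm ⇑T := fun x => T.symm_apply_apply x
    have rinv : Function.LeftInverse ⇑T ⇑T.symm := fun x => T.apply_symm_apply x
    ext y
    constructor
    · rintro ⟨x, hx, rfl⟩
      simpa [linv.iterate n x] using hx
    · intro hy
      exact ⟨(⇑T.symm)^[n] y, hy, (rinv.iterate n) y⟩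
  rw [himg]
  exact (hsymm.iterate n).measure_preimage hK.nullMeasurableSet

set_option maxHeartbeats 1000000 in
lemma dir2 {X : Type*} [MetricSpace X] [CompactSpace X] [MeasurableSpace X]
    [BorelSpace X] (μ : Measure X) [IsProbabilityMeasure μ] (T : X ≃ₜ X)
    (hT : MeasurePreserving T μ μ)
    (h : ∃ a : ℕ → ℕ, StrictMono a ∧
      ∀ τ > (0 : ℝ), ∃ K : Set X, IsCompact K ∧
        μ K > ENNReal.ofReal (1 - τ) ∧ ∀ ε > (0 : ℝ), ∃ δ > (0 : ℝ),
        ∀ x ∈ K, ∀ y ∈ K, dist x y < δ →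
          ∀ n : ℕ, dist ((⇑T)^[a n] x) ((⇑T)^[a n] y) < ε) :
    (∃ t : ℕ → ℕ, StrictMono t ∧ ∀ f : X → ℝ, MemLp f 2 μ →
      Tendsto (fun k => eLpNorm (fun x => f ((⇑T)^[t k] x) - f x) 2 μ)
        atTop (𝓝 0)) := by
  obtain ⟨a, ha, heq⟩ := h
  have hcont : ∀ n : ℕ, Continuous ((⇑T)^[n]) := fun n => T.continuous.iterate n
  -- key claim: arbitrarily large times with small displacement off a small set
  have claim : ∀ k M : ℕ, ∃ s, M < s ∧
      μ {x | 1/(k+1:ℝ) ≤ dist ((⇑T)^[s] x) x} ≤ ENNReal.ofReal (1/(k+1:ℝ)) := by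
    intro k M
    set τ : ℝ := 1/(k+1:ℝ) with hτdef
    have hτpos : 0 < τ := by positivity
    have hτ1 : τ ≤ 1 := by
      rw [hτdef]
      rw [div_le_one (by positivity)]
      norm_num
    obtain ⟨K, hKc, hKμ, hKeq⟩ := heq τ hτpos
    obtain ⟨δ, hδ, hδ'⟩ := hKeq (τ/8) (by positivity)
    -- finite δ-net of K with centers in K
    obtain ⟨J, hJK, hJfin, hJcov⟩ := totallyBounded_iff_subset.mp hKc.totallyBounded
      _ (Metric.dist_mem_uniformity hδ)
    -- finite τ/8-net of X
    obtain ⟨Q, hQfin, hQcov⟩ := Metric.totallyBounded_iff.mp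
      (isCompact_univ : IsCompact (Set.univ : Set X)).totallyBounded (τ/8) (by positivity)
    have hsel : ∀ (n : ℕ) (j : X), ∃ q ∈ Q, dist ((⇑T)^[a n] j) q < τ/8 := by
      intro n j
      have := hQcov (Set.mem_univ ((⇑T)^[a n] j))
      rw [Set.mem_iUnion₂] at this
      obtain ⟨q, hq, hball⟩ := this
      exact ⟨q, hq, Metric.mem_ball.mp hball⟩
    choose q hqQ hqd using hsel
    haveI : Fintype ↥hJfin.toFinset := FinsetCoe.fintype _
    haveI : Fintype ↥hQfin.toFinset := FinsetCoe.fintype _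
    let φ : ℕ → (↥hJfin.toFinset → ↥hQfin.toFinset) :=
      fun n j => ⟨q n j, hQfin.mem_toFinset.mpr (hqQ n j)⟩
    obtain ⟨c, hc⟩ := Finite.exists_infinite_fiber φ
    have hcinf : (φ ⁻¹' {c} : Set ℕ).Infinite := Set.infinite_coe_iff.mp hc
    obtain ⟨n₀, hn₀⟩ := hcinf.nonempty
    obtain ⟨n₁, hn₁, hn₁gt⟩ := hcinf.exists_gt (a n₀ + M)
    have han₁ : a n₀ + M < a n₁ := lt_of_le_of_lt (le_refl _) (lt_of_lt_of_le hn₁gt ha.le_apply)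
    refine ⟨a n₁ - a n₀, by omega, ?_⟩
    have hs_add : a n₁ - a n₀ + a n₀ = a n₁ := by omega
    -- closeness on K
    have hclose : ∀ x ∈ K, dist ((⇑T)^[a n₁] x) ((⇑T)^[a n₀] x) < τ/2 := by
      intro x hx
      have hxcov := hJcov hx
      rw [Set.mem_iUnion₂] at hxcov
      obtain ⟨j, hj, hxj⟩ := hxcov
      have hxj' : dist x j < δ := hxj
      have hjK : j ∈ K := hJK hj
      have e1 : dist ((⇑T)^[a n₁] x) ((⇑T)^[a n₁] j) < τ/8 := hδ' x hx j hjK hxj' n₁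
      have e4 : dist ((⇑T)^[a n₀] x) ((⇑T)^[a n₀] j) < τ/8 := hδ' x hx j hjK hxj' n₀
      have e2 : dist ((⇑T)^[a n₁] j) (q n₁ j) < τ/8 := hqd n₁ j
      have e3 : dist ((⇑T)^[a n₀] j) (q n₀ j) < τ/8 := hqd n₀ j
      have hqeq : q n₁ j = q n₀ j := by
        have h1 : φ n₁ = c := hn₁
        have h0 : φ n₀ = c := hn₀
        have := congrFun (h1.trans h0.symm) ⟨j, hJfin.mem_toFinset.mpr hj⟩
        exact congrArg Subtype.val this
      have htri := dist_triangle4 ((⇑T)^[a n₁] x) ((⇑T)^[a n₁] j) ((⇑T)^[a n₀] j)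
        ((⇑T)^[a n₀] x)
      have hmid : dist ((⇑T)^[a n₁] j) ((⇑T)^[a n₀] j) < τ/4 := by
        rw [← hqeq] at e3
        have h5 := dist_triangle ((⇑T)^[a n₁] j) (q n₁ j) ((⇑T)^[a n₀] j)
        rw [dist_comm (q n₁ j) ((⇑T)^[a n₀] j)] at h5
        linarith
      rw [dist_comm ((⇑T)^[a n₀] x) ((⇑T)^[a n₀] j)] at e4
      linarith
    -- transfer
    have hsub : {x | τ ≤ dist ((⇑T)^[a n₁ - a n₀] x) x} ⊆ ((⇑T)^[a n₀] '' K)ᶜ := by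
      intro y hy hyim
      obtain ⟨x, hx, rfl⟩ := hyim
      have hco : (⇑T)^[a n₁ - a n₀] ((⇑T)^[a n₀] x) = (⇑T)^[a n₁] x := by
        rw [← Function.iterate_add_apply, hs_add]
      simp only [Set.mem_setOf_eq, hco] at hy
      have := hclose x hx
      linarith
    calc μ {x | τ ≤ dist ((⇑T)^[a n₁ - a n₀] x) x}
        ≤ μ (((⇑T)^[a n₀] '' K)ᶜ) := measure_mono hsub
      _ = 1 - μ ((⇑T)^[a n₀] '' K) := by
          rw [measure_compl (hKc.image (hcont _)).isClosed.measurableSet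
            (measure_ne_top _ _), measure_univ]
      _ = 1 - μ K := by rw [aux_img_meas μ T hT _ hKc.measurableSet]
      _ ≤ 1 - ENNReal.ofReal (1 - τ) := tsub_le_tsub_left hKμ.le 1
      _ = ENNReal.ofReal τ := by
          rw [← ENNReal.ofReal_one, ← ENNReal.ofReal_sub 1 (by linarith)]
          norm_num
  -- build the rigidity sequence
  choose F hF1 hF2 using claim
  set t : ℕ → ℕ := fun k => Nat.rec (F 0 0) (fun k ih => F (k+1) ih) k with htdef
  have ht : StrictMono t := by
    apply strictMono_nat_of_lt_succ
    intro k
    exact hF1 (k+1) (t k)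
  have hbound : ∀ k : ℕ, μ {x | 1/((k:ℝ)+1) ≤ dist ((⇑T)^[t k] x) x} ≤
      ENNReal.ofReal (1/((k:ℝ)+1)) := by
    intro k
    cases k with
    | zero => exact hF2 0 0
    | succ k => exact hF2 (k+1) (t k)
  -- displacement tends to zero in measure
  have hμd : ∀ δ > (0:ℝ), Tendsto (fun k => μ {x | δ ≤ dist ((⇑T)^[t k] x) x}) atTop (𝓝 0) := by
    intro δ hδ
    have hub : Tendsto (fun k : ℕ => ENNReal.ofReal (1/(k+1:ℝ))) atTop (𝓝 0) := by
      have := ENNReal.tendsto_ofReal (tendsto_one_div_add_atTop_nhds_zero_nat)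
      simpa using this
    refine tendsto_of_tendsto_of_tendsto_of_le_of_le' tendsto_const_nhds hub
      (Eventually.of_forall fun k => zero_le) ?_
    have hev : ∀ᶠ k : ℕ in atTop, 1/((k:ℝ)+1) < δ :=
      tendsto_one_div_add_atTop_nhds_zero_nat.eventually (gt_mem_nhds hδ)
    filter_upwards [hev] with k hk
    refine le_trans (measure_mono ?_) (hbound k)
    intro x hx
    simp only [Set.mem_setOf_eq] at hx ⊢
    linarith
  refine ⟨t, ht, ?_⟩
  intro f hf
  rw [ENNReal.tendsto_nhds_zero]
  intro ε hε
  have hε4 : ε/4 ≠ 0 := by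
    simp only [ne_eq, ENNReal.div_eq_zero_iff, not_or]
    exact ⟨hε.ne', by norm_num⟩
  obtain ⟨g, hgapprox, hgmem⟩ := hf.exists_boundedContinuous_eLpNorm_sub_le
    ENNReal.ofNat_ne_top hε4
  -- uniform continuity of g
  have hgu : ∀ ρ > (0:ℝ), ∃ δ > (0:ℝ), ∀ x y : X, dist x y < δ → dist (g x) (g y) < ρ := by
    intro ρ hρ
    obtain ⟨δ, hδ, hδ'⟩ := Metric.uniformContinuous_iff.mp
      (CompactSpace.uniformContinuous_of_continuous g.continuous) ρ hρ
    exact ⟨δ, hδ, fun x y hxy => hδ' hxy⟩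
  have hgim : TendstoInMeasure μ (fun k x => g ((⇑T)^[t k] x)) atTop ⇑g := by
    rw [tendstoInMeasure_iff_dist]
    intro ρ hρ
    obtain ⟨δ, hδ, hδ'⟩ := hgu ρ hρ
    refine tendsto_of_tendsto_of_tendsto_of_le_of_le tendsto_const_nhds (hμd δ hδ)
      (fun k => zero_le) ?_
    intro k
    refine measure_mono ?_
    intro x hx
    simp only [Set.mem_setOf_eq] at hx ⊢
    by_contra hcon
    push_neg at hcon
    exact absurd hx (not_le.mpr (hδ' _ _ hcon))
  have hui : UnifIntegrable (fun k x => g ((⇑T)^[t k] x)) 2 μ := by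
    refine unifIntegrable_of (by norm_num) (by norm_num)
      (fun k => (g.continuous.comp (hcont (t k))).aestronglyMeasurable) ?_
    intro ρ hρ
    refine ⟨‖g‖₊ + 1, fun k => ?_⟩
    have hempty : {x | (‖g‖₊ + 1 : ℝ≥0) ≤ ‖g ((⇑T)^[t k] x)‖₊} = ∅ := by
      ext x
      simp only [Set.mem_setOf_eq, Set.mem_empty_iff_false, iff_false, not_le]
      exact lt_of_le_of_lt (g.nnnorm_coe_le_nnnorm _) (lt_add_one _)
    rw [hempty, Set.indicator_empty]
    simp [eLpNorm_zero]
  have hmid : Tendsto (fun k => eLpNorm ((fun x => g ((⇑T)^[t k] x)) - ⇑g) 2 μ) atTop (𝓝 0) :=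
    tendsto_Lp_finite_of_tendstoInMeasure (by norm_num) (by norm_num)
      (fun k => (g.continuous.comp (hcont (t k))).aestronglyMeasurable) hgmem hui hgim
  rw [ENNReal.tendsto_nhds_zero] at hmid
  have hε4pos : (0:ℝ≥0∞) < ε/4 := ENNReal.div_pos hε.ne' (by norm_num)
  filter_upwards [hmid (ε/4) hε4pos] with k hk
  -- triangle inequality
  have hfga : AEStronglyMeasurable (f - ⇑g) μ :=
    hf.aestronglyMeasurable.sub g.continuous.aestronglyMeasurable
  have h1asm : AEStronglyMeasurable (fun x => f ((⇑T)^[t k] x) - g ((⇑T)^[t k] x)) μ :=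
    hfga.comp_measurePreserving (hT.iterate (t k))
  have h2asm : AEStronglyMeasurable (fun x => g ((⇑T)^[t k] x) - g x) μ :=
    ((g.continuous.comp (hcont (t k))).sub g.continuous).aestronglyMeasurable
  have h3asm : AEStronglyMeasurable (fun x => g x - f x) μ :=
    g.continuous.aestronglyMeasurable.sub hf.aestronglyMeasurable
  have hdecomp : (fun x => f ((⇑T)^[t k] x) - f x) =
      (fun x => f ((⇑T)^[t k] x) - g ((⇑T)^[t k] x)) +
      ((fun x => g ((⇑T)^[t k] x) - g x) + (fun x => g x - f x)) := by
    funext x; simp only [Pi.add_apply]; ring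
  rw [hdecomp]
  have e1 : eLpNorm (fun x => f ((⇑T)^[t k] x) - g ((⇑T)^[t k] x)) 2 μ ≤ ε/4 := by
    have : eLpNorm ((f - ⇑g) ∘ ((⇑T)^[t k])) 2 μ = eLpNorm (f - ⇑g) 2 μ :=
      eLpNorm_comp_measurePreserving hfga (hT.iterate (t k))
    calc eLpNorm (fun x => f ((⇑T)^[t k] x) - g ((⇑T)^[t k] x)) 2 μ
        = eLpNorm (f - ⇑g) 2 μ := this
      _ ≤ ε/4 := hgapprox
  have e2 : eLpNorm (fun x => g ((⇑T)^[t k] x) - g x) 2 μ ≤ ε/4 := hk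
  have e3 : eLpNorm (fun x => g x - f x) 2 μ ≤ ε/4 := by
    calc eLpNorm (fun x => g x - f x) 2 μ = eLpNorm (⇑g - f) 2 μ := rfl
      _ = eLpNorm (f - ⇑g) 2 μ := eLpNorm_sub_comm _ _ _ _
      _ ≤ ε/4 := hgapprox
  calc eLpNorm ((fun x => f ((⇑T)^[t k] x) - g ((⇑T)^[t k] x)) +
        ((fun x => g ((⇑T)^[t k] x) - g x) + (fun x => g x - f x))) 2 μ
      ≤ eLpNorm (fun x => f ((⇑T)^[t k] x) - g ((⇑T)^[t k] x)) 2 μ +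
        eLpNorm ((fun x => g ((⇑T)^[t k] x) - g x) + (fun x => g x - f x)) 2 μ :=
        eLpNorm_add_le h1asm (h2asm.add h3asm) (by norm_num)
    _ ≤ eLpNorm (fun x => f ((⇑T)^[t k] x) - g ((⇑T)^[t k] x)) 2 μ +
        (eLpNorm (fun x => g ((⇑T)^[t k] x) - g x) 2 μ +
         eLpNorm (fun x => g x - f x) 2 μ) :=
        add_le_add le_rfl (eLpNorm_add_le h2asm h3asm (by norm_num))
    _ ≤ ε/4 + (ε/4 + ε/4) := add_le_add e1 (add_le_add e2 e3)
    _ ≤ ε := by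
        have hstep : ε/4 + ε/4 + (ε/4 + ε/4) = ε := by
          have h1 : ε/4 + ε/4 + (ε/4 + ε/4) = (ε + ε + (ε + ε))/4 := by
            simp only [ENNReal.div_add_div_same]
          rw [h1, show ε + ε + (ε + ε) = 4*ε by ring, mul_div_assoc,
            ENNReal.mul_div_cancel' (by norm_num) (by norm_num)]
        calc ε/4 + (ε/4 + ε/4) ≤ ε/4 + ε/4 + (ε/4 + ε/4) :=
              add_le_add le_self_add le_rfl
          _ = ε := hstep

theorem stmt12 {X : Type*} [MetricSpace X] [CompactSpace X] [MeasurableSpace X]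
    [BorelSpace X] (μ : Measure X) [IsProbabilityMeasure μ] (T : X ≃ₜ X)
    (hT : MeasurePreserving T μ μ) :
    (∃ t : ℕ → ℕ, StrictMono t ∧ ∀ f : X → ℝ, MemLp f 2 μ →
      Tendsto (fun k => eLpNorm (fun x => f ((⇑T)^[t k] x) - f x) 2 μ)
        atTop (𝓝 0)) ↔
    (∃ a : ℕ → ℕ, StrictMono a ∧
      ∀ τ > (0 : ℝ), ∃ K : Set X, IsCompact K ∧
        μ K > ENNReal.ofReal (1 - τ) ∧ ∀ ε > (0 : ℝ), ∃ δ > (0 : ℝ),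
        ∀ x ∈ K, ∀ y ∈ K, dist x y < δ →
          ∀ n : ℕ, dist ((⇑T)^[a n] x) ((⇑T)^[a n] y) < ε) := by
  exact ⟨dir1 μ T hT, dir2 μ T hT⟩
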